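/- Let p̃(x|θ) = C(M,x) θ^x (1-θ)^{M-x} with M ≥ 2 and fix θ_* ∈ (0,1). Then the two functions x ↦ ∂p̃/∂θ(x|θ_*) and x ↦ ∂²p̃/∂θ²(x|θ_*) on {0,1,...,M} are linearly independent over ℝ. -/

import Mathlib

/-- Binomial pmf `Bin(M, θ)` as a function of `x` and `θ`. -/
noncomputable def binomPMF' (M : ℕ) (x : ℕ) (θ : ℝ) : ℝ :=
  (M.choose x : ℝ) * θ ^ x * (1 - θ) ^ (M - x)

private lemma hasDeriv_osp (n : ℕ) (θ : ℝ) :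
    HasDerivAt (fun θ : ℝ => (1 - θ) ^ n) ((n : ℝ) * (1 - θ) ^ (n - 1) * (-1)) θ := by
  simpa using ((hasDerivAt_id θ).const_sub 1).fun_pow n

private lemma deriv_osp (n : ℕ) :
    deriv (fun θ : ℝ => (1 - θ) ^ n) = fun θ => -((n : ℝ) * (1 - θ) ^ (n - 1)) := by
  funext θ
  have := (hasDeriv_osp n θ).deriv
  rw [this]; ring

private lemma deriv_pw (n : ℕ) :
    deriv (fun θ : ℝ => θ ^ n) = fun θ => (n : ℝ) * θ ^ (n - 1) := by
  funext θ; simp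

theorem binomial_derivatives_linearIndependent
    (M : ℕ) (hM : 2 ≤ M) (θs : ℝ) (hθs : 0 < θs ∧ θs < 1) :
    LinearIndependent ℝ
      ![(fun x : Fin (M + 1) => deriv (fun θ => binomPMF' M x θ) θs),
        (fun x : Fin (M + 1) => deriv (deriv (fun θ => binomPMF' M x θ)) θs)] := by
  obtain ⟨k, rfl⟩ : ∃ k, M = k + 2 := ⟨M - 2, by omega⟩
  obtain ⟨hθ0, hθ1⟩ := hθs
  rw [LinearIndependent.pair_iff]
  intro a b hab
  have hf0 : (fun θ => binomPMF' (k + 2) ((0 : Fin (k + 3)) : ℕ) θ)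
      = fun θ : ℝ => (1 - θ) ^ (k + 2) := by
    funext θ; simp [binomPMF']
  have hfM : (fun θ => binomPMF' (k + 2) ((⟨k + 2, by omega⟩ : Fin (k + 3)) : ℕ) θ)
      = fun θ : ℝ => θ ^ (k + 2) := by
    funext θ; simp [binomPMF']
  have e0 := congrFun hab (0 : Fin (k + 3))
  have eM := congrFun hab (⟨k + 2, by omega⟩ : Fin (k + 3))
  simp only [Pi.add_apply, Pi.smul_apply, Matrix.cons_val_zero, Matrix.cons_val_one,
    Matrix.head_cons, Pi.zero_apply, smul_eq_mul, hf0, hfM] at e0 eM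
  rw [deriv_osp] at e0
  rw [deriv_pw] at eM
  simp only [show k + 2 - 1 = k + 1 from rfl] at e0 eM
  beta_reduce at e0 eM
  have d0b : deriv (fun θ : ℝ => -(((k + 2 : ℕ) : ℝ) * (1 - θ) ^ (k + 1))) θs
      = ((k + 2 : ℕ) : ℝ) * (((k + 1 : ℕ) : ℝ) * (1 - θs) ^ k) := by
    have h : HasDerivAt (fun θ : ℝ => -(((k + 2 : ℕ) : ℝ) * (1 - θ) ^ (k + 1)))
        (((k + 2 : ℕ) : ℝ) * (((k + 1 : ℕ) : ℝ) * (1 - θs) ^ k)) θs := by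
      have := ((hasDeriv_osp (k + 1) θs).const_mul (((k + 2 : ℕ)) : ℝ)).fun_neg
      simp only [Nat.add_sub_cancel] at this
      refine this.congr_deriv ?_
      ring
    exact h.deriv
  have dMb : deriv (fun θ : ℝ => ((k + 2 : ℕ) : ℝ) * θ ^ (k + 1)) θs
      = ((k + 2 : ℕ) : ℝ) * (((k + 1 : ℕ) : ℝ) * θs ^ k) := by
    have h : HasDerivAt (fun θ : ℝ => ((k + 2 : ℕ) : ℝ) * θ ^ (k + 1))
        (((k + 2 : ℕ) : ℝ) * (((k + 1 : ℕ) : ℝ) * θs ^ k)) θs := by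
      have := (hasDerivAt_pow (k + 1) θs).const_mul (((k + 2 : ℕ)) : ℝ)
      simp only [Nat.add_sub_cancel] at this
      exact this
    exact h.deriv
  rw [d0b] at e0
  rw [dMb] at eM
  push_cast at e0 eM
  have h1 : -a * (1 - θs) + b * ((k : ℝ) + 1) = 0 := by
    have hne : ((k : ℝ) + 2) * (1 - θs) ^ k ≠ 0 := by
      have : (0:ℝ) < 1 - θs := by linarith
      positivity
    have key : ((k : ℝ) + 2) * (1 - θs) ^ k * (-a * (1 - θs) + b * ((k : ℝ) + 1)) = 0 := by
      linear_combination e0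
    exact (mul_eq_zero.1 key).resolve_left hne
  have h2 : a * θs + b * ((k : ℝ) + 1) = 0 := by
    have hne : ((k : ℝ) + 2) * θs ^ k ≠ 0 := by positivity
    have key : ((k : ℝ) + 2) * θs ^ k * (a * θs + b * ((k : ℝ) + 1)) = 0 := by
      linear_combination eM
    exact (mul_eq_zero.1 key).resolve_left hne
  have ha : a = 0 := by linear_combination h2 - h1
  have hb : b = 0 := by
    have hbk : b * ((k : ℝ) + 1) = 0 := by linear_combination h2 - θs * ha
    have : ((k : ℝ) + 1) ≠ 0 := by positivity
    exact (mul_eq_zero.1 hbk).resolve_right this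
  exact ⟨ha, hb⟩
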